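/- Define Q(k,θ) = log(1 + sin(θ/2)·sin(kθ/2)/sin²((1-k)θ/4)) / log(1 + sin(kπ/2)/sin²((1-k)π/4)) for 0 < k < 1 and 0 < θ < 2π. Then 1 ≤ Q(k,θ) ≤ (π·sin(θ/2)/θ)² if 0 < θ < π, and (π·sin(θ/2)/θ)² ≤ Q(k,θ) ≤ 1 if π < θ < 2π. -/

import Mathlib

open Real Set

noncomputable def Q (k θ : ℝ) : ℝ :=
  Real.log (1 + Real.sin (θ / 2) * Real.sin (k * θ / 2) / (Real.sin ((1 - k) * θ / 4))^2) /
    Real.log (1 + Real.sin (k * Real.pi / 2) / (Real.sin ((1 - k) * Real.pi / 4))^2)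


lemma xcos_lt_sin {x : ℝ} (h1 : 0 < x) (h2 : x < π) : x * cos x < sin x := by
  rcases lt_or_ge x (π/2) with h | h
  · have hc : 0 < cos x := cos_pos_of_mem_Ioo ⟨by linarith [pi_pos], h⟩
    have ht := lt_tan h1 h
    rw [tan_eq_sin_div_cos, lt_div_iff₀ hc] at ht
    linarith
  · have hc : cos x ≤ 0 := cos_nonpos_of_pi_div_two_le_of_le h (by linarith [pi_pos])
    have hs : 0 < sin x := sin_pos_of_pos_of_lt_pi h1 h2
    nlinarith

lemma sincos_lt {x : ℝ} (h1 : 0 < x) : sin x * cos x < x := by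
  have := sin_lt (x := 2*x) (by linarith)
  rw [sin_two_mul] at this
  linarith

lemma cot_anti : StrictAntiOn (fun x : ℝ => x * cos x / sin x) (Ioo 0 π) := by
  apply strictAntiOn_of_deriv_neg (convex_Ioo 0 π)
  · apply ContinuousOn.div
    · fun_prop
    · fun_prop
    · intro x hx; exact (sin_pos_of_pos_of_lt_pi hx.1 hx.2).ne'
  · intro x hx
    rw [interior_Ioo] at hx
    have hs : 0 < sin x := sin_pos_of_pos_of_lt_pi hx.1 hx.2
    have hd : HasDerivAt (fun x : ℝ => x * cos x / sin x)
        (((1 * cos x + x * (-sin x)) * sin x - x * cos x * cos x) / sin x ^ 2) x := by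
      exact ((hasDerivAt_id x).mul (hasDerivAt_cos x)).div (hasDerivAt_sin x) hs.ne'
    rw [hd.deriv]
    apply div_neg_of_neg_of_pos _ (by positivity)
    have he : (1 * cos x + x * (-sin x)) * sin x - x * cos x * cos x = sin x * cos x - x := by
      linear_combination (-x) * sin_sq_add_cos_sq x
    rw [he]
    linarith [sincos_lt hx.1]

lemma sin_div_anti : StrictAntiOn (fun x : ℝ => sin x / x) (Ioo 0 π) := by
  apply strictAntiOn_of_deriv_neg (convex_Ioo 0 π)
  · apply ContinuousOn.div (by fun_prop) (by fun_prop)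
    intro x hx; exact hx.1.ne'
  · intro x hx
    rw [interior_Ioo] at hx
    have hd : HasDerivAt (fun x : ℝ => sin x / x) ((cos x * x - sin x * 1) / x ^ 2) x :=
      (hasDerivAt_sin x).div (hasDerivAt_id x) hx.1.ne'
    rw [hd.deriv]
    apply div_neg_of_neg_of_pos _ (pow_pos hx.1 2)
    nlinarith [xcos_lt_sin hx.1 hx.2]



-- x1/sin a ≤ x2/sin b when a = c*x1, b = c*x2 (proportional), a ≤ b in (0,π)
lemma mono2 {a b x1 x2 : ℝ} (ha : 0 < a) (hb : b < π) (hab : a ≤ b) (hx1 : 0 < x1)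
    (hx2 : 0 < x2) (hprop : a * x2 = b * x1) : x1 / sin a ≤ x2 / sin b := by
  have hbpos : 0 < b := lt_of_lt_of_le ha hab
  have hsa : 0 < sin a := sin_pos_of_pos_of_lt_pi ha (lt_of_le_of_lt hab hb)
  have hsb : 0 < sin b := sin_pos_of_pos_of_lt_pi hbpos hb
  have h := sin_div_anti.antitoneOn ⟨ha, lt_of_le_of_lt hab hb⟩ ⟨hbpos, hb⟩ hab
  simp only [div_le_div_iff₀ hbpos ha] at h
  rw [div_le_div_iff₀ hsa hsb]
  nlinarith [mul_pos hx1 hsb]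

lemma anti2 {a b : ℝ} (ha : 0 < a) (hb : b < π) (hab : a ≤ b) :
    b * cos b / sin b ≤ a * cos a / sin a :=
  cot_anti.antitoneOn ⟨ha, lt_of_le_of_lt hab hb⟩ ⟨lt_of_lt_of_le ha hab, hb⟩ hab

lemma trig_id (k θ : ℝ) :
    sin ((1-k)*θ/4)^2 + sin (θ/2) * sin (k*θ/2) = sin ((1+k)*θ/4)^2 := by
  have h1 : θ/2 = (1+k)*θ/4 + (1-k)*θ/4 := by ring
  have h2 : k*θ/2 = (1+k)*θ/4 - (1-k)*θ/4 := by ring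
  rw [h1, h2, sin_add, sin_sub]
  nlinarith [sin_sq_add_cos_sq ((1+k)*θ/4), sin_sq_add_cos_sq ((1-k)*θ/4)]



noncomputable def vI (θ s : ℝ) : ℝ :=
  cos ((1+s)*θ/4) * (θ/4) / sin ((1+s)*θ/4) + cos ((1-s)*θ/4) * (θ/4) / sin ((1-s)*θ/4)

lemma sinA_pos {θ s k : ℝ} (hθ1 : 0 < θ) (hθ2 : θ < 2*π) (hk2 : k < 1) (hs : s ∈ Icc 0 k) :
    0 < sin ((1+s)*θ/4) := by
  apply sin_pos_of_pos_of_lt_pi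
  · have : (0:ℝ) < 1 + s := by linarith [hs.1]
    positivity
  · nlinarith [hs.2, pi_pos]

lemma sinB_pos {θ s k : ℝ} (hθ1 : 0 < θ) (hθ2 : θ < 2*π) (hk2 : k < 1) (hs : s ∈ Icc 0 k) :
    0 < sin ((1-s)*θ/4) := by
  apply sin_pos_of_pos_of_lt_pi
  · have : (0:ℝ) < 1 - s := by linarith [hs.2]
    positivity
  · nlinarith [hs.1, pi_pos]

lemma vI_contOn {k θ : ℝ} (hk1 : 0 < k) (hk2 : k < 1) (hθ1 : 0 < θ) (hθ2 : θ < 2*π) :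
    ContinuousOn (vI θ) (Icc 0 k) := by
  apply ContinuousOn.add
  · exact ContinuousOn.div (by fun_prop) (by fun_prop)
      (fun s hs => (sinA_pos hθ1 hθ2 hk2 hs).ne')
  · exact ContinuousOn.div (by fun_prop) (by fun_prop)
      (fun s hs => (sinB_pos hθ1 hθ2 hk2 hs).ne')

lemma N_integral {k θ : ℝ} (hk1 : 0 < k) (hk2 : k < 1) (hθ1 : 0 < θ) (hθ2 : θ < 2*π) :
    ∫ s in (0:ℝ)..k, vI θ s
      = log (sin ((1+k)*θ/4)) - log (sin ((1-k)*θ/4)) := by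
  have huIcc : uIcc (0:ℝ) k = Icc 0 k := uIcc_of_le hk1.le
  have key : ∫ s in (0:ℝ)..k, vI θ s =
      (log (sin ((1+k)*θ/4)) - log (sin ((1-k)*θ/4)))
        - (log (sin ((1+0)*θ/4)) - log (sin ((1-0)*θ/4))) := by
    apply intervalIntegral.integral_eq_sub_of_hasDerivAt
    · intro s hs
      rw [huIcc] at hs
      have hA := sinA_pos hθ1 hθ2 hk2 hs
      have hB := sinB_pos hθ1 hθ2 hk2 hs
      have d1 : HasDerivAt (fun s : ℝ => (1+s)*θ/4) (θ/4) s := by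
        have h0 : (fun s : ℝ => (1+s)*θ/4) = fun s => s * (θ/4) + θ/4 := by funext s; ring
        rw [h0]
        simpa using ((hasDerivAt_id s).mul_const (θ/4)).add_const (θ/4)
      have d2 : HasDerivAt (fun s : ℝ => (1-s)*θ/4) (-(θ/4)) s := by
        have h0 : (fun s : ℝ => (1-s)*θ/4) = fun s => s * (-(θ/4)) + θ/4 := by funext s; ring
        rw [h0]
        simpa using ((hasDerivAt_id s).mul_const (-(θ/4))).add_const (θ/4)
      have hd := ((d1.sin).log hA.ne').sub ((d2.sin).log hB.ne')
      have hv : vI θ s = cos ((1+s)*θ/4) * (θ/4) / sin ((1+s)*θ/4)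
          - cos ((1-s)*θ/4) * (-(θ/4)) / sin ((1-s)*θ/4) := by
        unfold vI; ring
      rw [hv]
      exact hd
    · rw [intervalIntegrable_iff_integrableOn_Icc_of_le hk1.le]
      exact (vI_contOn hk1 hk2 hθ1 hθ2).integrableOn_compact isCompact_Icc
  rw [key]; norm_num

lemma vI_anti {k θ1 θ2 s : ℝ} (hk2 : k < 1) (h1 : 0 < θ1) (h12 : θ1 ≤ θ2)
    (h2 : θ2 < 2*π) (hs : s ∈ Icc 0 k) : vI θ2 s ≤ vI θ1 s := by
  have hs1 : (0:ℝ) < 1 + s := by linarith [hs.1]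
  have hs2 : (0:ℝ) < 1 - s := by linarith [hs.2]
  have key1 : ∀ θ c sn : ℝ, (1/(1+s)) * ((1+s)*θ/4 * c / sn) = c * (θ/4) / sn := by
    intro θ c sn
    rw [show (1+s)*θ/4 * c = (1+s) * (c * (θ/4)) by ring, mul_div_assoc, ← mul_assoc,
      one_div_mul_cancel hs1.ne', one_mul]
  have key2 : ∀ θ c sn : ℝ, (1/(1-s)) * ((1-s)*θ/4 * c / sn) = c * (θ/4) / sn := by
    intro θ c sn
    rw [show (1-s)*θ/4 * c = (1-s) * (c * (θ/4)) by ring, mul_div_assoc, ← mul_assoc,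
      one_div_mul_cancel hs2.ne', one_mul]
  have e : ∀ θ : ℝ, vI θ s =
      (1/(1+s)) * (((1+s)*θ/4) * cos ((1+s)*θ/4) / sin ((1+s)*θ/4))
      + (1/(1-s)) * (((1-s)*θ/4) * cos ((1-s)*θ/4) / sin ((1-s)*θ/4)) := by
    intro θ
    rw [key1, key2]
    rfl
  rw [e θ1, e θ2]
  have hA : (1+s)*θ2/4 < π := by nlinarith [hs.2, pi_pos]
  have hB : (1-s)*θ2/4 < π := by nlinarith [hs.1, pi_pos]
  have t1 := anti2 (a := (1+s)*θ1/4) (b := (1+s)*θ2/4) (by positivity) hA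
    (by nlinarith)
  have t2 := anti2 (a := (1-s)*θ1/4) (b := (1-s)*θ2/4) (by positivity) hB
    (by nlinarith)
  have c1 : (0:ℝ) ≤ 1/(1+s) := by positivity
  have c2 : (0:ℝ) ≤ 1/(1-s) := by positivity
  have := mul_le_mul_of_nonneg_left t1 c1
  have := mul_le_mul_of_nonneg_left t2 c2
  linarith

lemma w_mono {k θ1 θ2 s : ℝ} (hk2 : k < 1) (h1 : 0 < θ1) (h12 : θ1 ≤ θ2)
    (h2 : θ2 < 2*π) (hs : s ∈ Icc 0 k) :
    θ1^2/(sin (θ1/2))^2 * vI θ1 s ≤ θ2^2/(sin (θ2/2))^2 * vI θ2 s := by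
  have hs1 : (0:ℝ) < 1 + s := by linarith [hs.1]
  have hs2 : (0:ℝ) < 1 - s := by linarith [hs.2]
  have e : ∀ θ : ℝ, 0 < θ → θ < 2*π → θ^2/(sin (θ/2))^2 * vI θ s =
      (1/4) * (θ / sin (θ/2)) * (θ / sin ((1+s)*θ/4)) * (θ / sin ((1-s)*θ/4)) := by
    intro θ hp hl
    have hA : 0 < sin ((1+s)*θ/4) := sinA_pos hp hl hk2 hs
    have hB : 0 < sin ((1-s)*θ/4) := sinB_pos hp hl hk2 hs
    have hH : 0 < sin (θ/2) := sin_pos_of_pos_of_lt_pi (by positivity) (by linarith [pi_pos])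
    have hadd : sin (θ/2) = sin ((1+s)*θ/4) * cos ((1-s)*θ/4)
        + cos ((1+s)*θ/4) * sin ((1-s)*θ/4) := by
      rw [show θ/2 = (1+s)*θ/4 + (1-s)*θ/4 by ring, sin_add]
    have ea : vI θ s = (θ/4) * sin (θ/2) / (sin ((1+s)*θ/4) * sin ((1-s)*θ/4)) := by
      unfold vI
      rw [hadd]
      rw [div_add_div _ _ hA.ne' hB.ne']
      congr 1; ring
    rw [ea]
    field_simp [hA.ne', hB.ne', hH.ne']
  rw [e θ1 h1 (lt_of_le_of_lt h12 h2), e θ2 (lt_of_lt_of_le h1 h12) h2]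
  have hA1 : 0 < sin ((1+s)*θ1/4) := sinA_pos h1 (lt_of_le_of_lt h12 h2) hk2 hs
  have hB1 : 0 < sin ((1-s)*θ1/4) := sinB_pos h1 (lt_of_le_of_lt h12 h2) hk2 hs
  have hH1 : 0 < sin (θ1/2) := sin_pos_of_pos_of_lt_pi (by positivity) (by nlinarith [pi_pos])
  have hp2 : 0 < θ2 := lt_of_lt_of_le h1 h12
  have m1 : θ1 / sin (θ1/2) ≤ θ2 / sin (θ2/2) :=
    mono2 (by positivity) (by linarith [pi_pos]) (by linarith) h1 hp2 (by ring)
  have m2 : θ1 / sin ((1+s)*θ1/4) ≤ θ2 / sin ((1+s)*θ2/4) :=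
    mono2 (by positivity) (by nlinarith [hs.2, pi_pos]) (by nlinarith) h1 hp2 (by ring)
  have m3 : θ1 / sin ((1-s)*θ1/4) ≤ θ2 / sin ((1-s)*θ2/4) :=
    mono2 (by positivity) (by nlinarith [hs.1, pi_pos]) (by nlinarith) h1 hp2 (by ring)
  have n1 : 0 ≤ θ1 / sin (θ1/2) := le_of_lt (div_pos h1 hH1)
  have n2 : 0 ≤ θ1 / sin ((1+s)*θ1/4) := le_of_lt (div_pos h1 hA1)
  have n3 : 0 ≤ θ1 / sin ((1-s)*θ1/4) := le_of_lt (div_pos h1 hB1)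
  have q1 : 0 ≤ θ2 / sin (θ2/2) := le_trans n1 m1
  have q2 : 0 ≤ θ2 / sin ((1+s)*θ2/4) := le_trans n2 m2
  have step1 : (1/4) * (θ1 / sin (θ1/2)) ≤ (1/4) * (θ2 / sin (θ2/2)) := by linarith
  have step2 := mul_le_mul step1 m2 n2 (by linarith)
  have step3 := mul_le_mul step2 m3 n3 (mul_nonneg (by linarith) q2)
  exact step3


lemma logQ_eq {k θ : ℝ} (hk1 : 0 < k) (hk2 : k < 1) (hθ1 : 0 < θ) (hθ2 : θ < 2*π) :
    log (1 + sin (θ/2) * sin (k*θ/2) / (sin ((1-k)*θ/4))^2)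
      = 2 * (log (sin ((1+k)*θ/4)) - log (sin ((1-k)*θ/4))) := by
  have hsk : k ∈ Icc 0 k := ⟨hk1.le, le_refl k⟩
  have hA : 0 < sin ((1+k)*θ/4) := sinA_pos hθ1 hθ2 hk2 hsk
  have hB : 0 < sin ((1-k)*θ/4) := sinB_pos hθ1 hθ2 hk2 hsk
  have harg : 1 + sin (θ/2) * sin (k*θ/2) / (sin ((1-k)*θ/4))^2
      = (sin ((1+k)*θ/4))^2 / (sin ((1-k)*θ/4))^2 := by
    rw [eq_div_iff (pow_ne_zero 2 hB.ne'), add_mul, div_mul_cancel₀ _ (pow_ne_zero 2 hB.ne')]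
    linear_combination trig_id k θ
  rw [harg, log_div (pow_ne_zero 2 hA.ne') (pow_ne_zero 2 hB.ne'), log_pow, log_pow]
  push_cast
  ring

lemma N_pos {k θ : ℝ} (hk1 : 0 < k) (hk2 : k < 1) (hθ1 : 0 < θ) (hθ2 : θ < 2*π) :
    0 < log (sin ((1+k)*θ/4)) - log (sin ((1-k)*θ/4)) := by
  have hsk : k ∈ Icc 0 k := ⟨hk1.le, le_refl k⟩
  have hB : 0 < sin ((1-k)*θ/4) := sinB_pos hθ1 hθ2 hk2 hsk
  have hS : 0 < sin (θ/2) := sin_pos_of_pos_of_lt_pi (by positivity) (by linarith [pi_pos])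
  have hK : 0 < sin (k*θ/2) := by
    apply sin_pos_of_pos_of_lt_pi (by positivity)
    nlinarith [pi_pos]
  have hlog : 0 < log (1 + sin (θ/2) * sin (k*θ/2) / (sin ((1-k)*θ/4))^2) := by
    apply log_pos
    have : 0 < sin (θ/2) * sin (k*θ/2) / (sin ((1-k)*θ/4))^2 := by positivity
    linarith
  rw [logQ_eq hk1 hk2 hθ1 hθ2] at hlog
  linarith

lemma N_compare {k θ1 θ2 : ℝ} (hk1 : 0 < k) (hk2 : k < 1) (h1 : 0 < θ1) (h12 : θ1 ≤ θ2)
    (h2 : θ2 < 2*π) :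
    (log (sin ((1+k)*θ2/4)) - log (sin ((1-k)*θ2/4))
        ≤ log (sin ((1+k)*θ1/4)) - log (sin ((1-k)*θ1/4))) ∧
    θ1^2/(sin (θ1/2))^2 * (log (sin ((1+k)*θ1/4)) - log (sin ((1-k)*θ1/4)))
        ≤ θ2^2/(sin (θ2/2))^2 * (log (sin ((1+k)*θ2/4)) - log (sin ((1-k)*θ2/4))) := by
  have hθ1' : θ1 < 2*π := lt_of_le_of_lt h12 h2
  have hθ2' : 0 < θ2 := lt_of_lt_of_le h1 h12
  have hi1 : IntervalIntegrable (vI θ1) MeasureTheory.volume 0 k := by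
    rw [intervalIntegrable_iff_integrableOn_Icc_of_le hk1.le]
    exact (vI_contOn hk1 hk2 h1 hθ1').integrableOn_compact isCompact_Icc
  have hi2 : IntervalIntegrable (vI θ2) MeasureTheory.volume 0 k := by
    rw [intervalIntegrable_iff_integrableOn_Icc_of_le hk1.le]
    exact (vI_contOn hk1 hk2 hθ2' h2).integrableOn_compact isCompact_Icc
  rw [← N_integral hk1 hk2 h1 hθ1', ← N_integral hk1 hk2 hθ2' h2]
  constructor
  · exact intervalIntegral.integral_mono_on hk1.le hi2 hi1
      (fun s hs => vI_anti hk2 h1 h12 h2 hs)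
  · rw [← intervalIntegral.integral_const_mul, ← intervalIntegral.integral_const_mul]
    exact intervalIntegral.integral_mono_on hk1.le (hi1.const_mul _) (hi2.const_mul _)
      (fun s hs => w_mono hk2 h1 h12 h2 hs)

theorem stmt17 (k θ : ℝ) (hk1 : 0 < k) (hk2 : k < 1) (hθ1 : 0 < θ) (hθ2 : θ < 2 * Real.pi) :
    (θ < Real.pi → 1 ≤ Q k θ ∧ Q k θ ≤ (Real.pi * Real.sin (θ / 2) / θ)^2) ∧
    (Real.pi < θ → (Real.pi * Real.sin (θ / 2) / θ)^2 ≤ Q k θ ∧ Q k θ ≤ 1) := by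
  have hπ1 : 0 < π := pi_pos
  have hπ2 : π < 2*π := by linarith
  set Nθ := log (sin ((1+k)*θ/4)) - log (sin ((1-k)*θ/4)) with hNθ
  set Nπ := log (sin ((1+k)*π/4)) - log (sin ((1-k)*π/4)) with hNπ
  have hNθpos : 0 < Nθ := N_pos hk1 hk2 hθ1 hθ2
  have hNπpos : 0 < Nπ := N_pos hk1 hk2 hπ1 hπ2
  have hQ : Q k θ = Nθ / Nπ := by
    have hden : (1:ℝ) + sin (k*π/2) / (sin ((1-k)*π/4))^2
        = 1 + sin (π/2) * sin (k*π/2) / (sin ((1-k)*π/4))^2 := by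
      rw [sin_pi_div_two]; ring
    unfold Q
    rw [logQ_eq hk1 hk2 hθ1 hθ2, hden, logQ_eq hk1 hk2 hπ1 hπ2, ← hNθ, ← hNπ]
    rw [mul_div_mul_left _ _ (two_ne_zero)]
  have hS : 0 < sin (θ/2) := sin_pos_of_pos_of_lt_pi (by positivity) (by linarith)
  constructor
  · intro hlt
    have hcmp := N_compare hk1 hk2 hθ1 hlt.le hπ2
    rw [← hNθ, ← hNπ] at hcmp
    constructor
    · rw [hQ, le_div_iff₀ hNπpos, one_mul]
      exact hcmp.1
    · have h := hcmp.2
      rw [show π/2 = π/2 from rfl] at h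
      rw [sin_pi_div_two] at h
      have h' : θ^2 * Nθ ≤ π^2 * Nπ * (sin (θ/2))^2 := by
        rw [div_mul_eq_mul_div, div_le_iff₀ (by positivity : (0:ℝ) < (sin (θ/2))^2)] at h
        nlinarith [h]
      rw [hQ, div_le_iff₀ hNπpos, div_pow, div_mul_eq_mul_div, le_div_iff₀ (pow_pos hθ1 2)]
      nlinarith [h']
  · intro hlt
    have hcmp := N_compare hk1 hk2 hπ1 hlt.le hθ2
    rw [← hNθ, ← hNπ] at hcmp
    constructor
    · have h := hcmp.2
      rw [sin_pi_div_two] at h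
      rw [one_pow, div_one] at h
      have h' : π^2 * Nπ * (sin (θ/2))^2 ≤ θ^2 * Nθ := by
        rw [div_mul_eq_mul_div, le_div_iff₀ (by positivity : (0:ℝ) < (sin (θ/2))^2)] at h
        nlinarith [h]
      rw [hQ, le_div_iff₀ hNπpos, div_pow, div_mul_eq_mul_div, div_le_iff₀ (pow_pos hθ1 2)]
      nlinarith [h']
    · rw [hQ, div_le_one hNπpos]
      exact hcmp.1
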